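/- arXiv:1502.04154 — 8 statements merged into one kernel-verified Lean document; each statement's English description precedes it below -/
import Mathlib

section
/- Let L1 = (t_1 ≤ t_2 ≤ ... ≤ t_n) and L2 = (s_1 ≤ s_2 ≤ ... ≤ s_m) be sorted lists of real numbers and let τ_min ≤ τ_max be reals. For every matching (a set of pairs (i,j) with each index used at most once) such that s_j - t_i ∈ [τ_min, τ_max] for every matched pair, there exists a non-crossing matching of the same cardinality, i.e. one that can be written as pairs (i_1,j_1),...,(i_k,j_k) with i_1 < i_2 < ... < i_k and j_1 < j_2 < ... < j_k. (In other words, imposing the causality/non-crossing constraint does not decrease the maximum matching size.) -/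
open Finset in
private lemma matching_exists_up {α β : Type*} [LinearOrder α] [LinearOrder β] [DecidableEq α] [DecidableEq β]
    (M : Finset (α × β)) (hsnd : Set.InjOn Prod.snd (M : Set (α × β)))
    {k : ℕ} (hA : (M.image Prod.fst).card = k) (hB : (M.image Prod.snd).card = k)
    (l : Fin k) :
    ∃ p ∈ M, p.1 ≤ (M.image Prod.fst).orderEmbOfFin hA l ∧
      (M.image Prod.snd).orderEmbOfFin hB l ≤ p.2 := by
  classical
  by_contra h
  push_neg at h
  set A := M.image Prod.fst with hAdef
  set B := M.image Prod.snd with hBdef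
  set fA := A.orderEmbOfFin hA with hfA
  set fB := B.orderEmbOfFin hB with hfB
  set S := M.filter (fun p => p.1 ≤ fA l) with hSdef
  have hS1 : (S.image Prod.snd).card = S.card :=
    Finset.card_image_of_injOn (hsnd.mono (Finset.coe_subset.mpr (Finset.filter_subset _ _)))
  have hsub : S.image Prod.snd ⊆ B.filter (· < fB l) := by
    intro b hb
    obtain ⟨p, hp, rfl⟩ := Finset.mem_image.mp hb
    rw [hSdef, Finset.mem_filter] at hp
    exact Finset.mem_filter.mpr ⟨Finset.mem_image_of_mem _ hp.1, h p hp.1 hp.2⟩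
  have h3 : (B.filter (· < fB l)).card ≤ (l : ℕ) := by
    have hsub3 : B.filter (· < fB l) ⊆ (Finset.Iio l).image fB := by
      intro b hb
      rw [Finset.mem_filter] at hb
      obtain ⟨l', rfl⟩ : ∃ l', fB l' = b := by
        have hr := Finset.range_orderEmbOfFin B hB
        have : b ∈ Set.range fB := by rw [hr]; exact_mod_cast hb.1
        exact this
      exact Finset.mem_image.mpr ⟨l', Finset.mem_Iio.mpr (fB.lt_iff_lt.mp hb.2), rfl⟩
    calc (B.filter (· < fB l)).card ≤ ((Finset.Iio l).image fB).card :=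
          Finset.card_le_card hsub3
      _ ≤ (Finset.Iio l).card := Finset.card_image_le
      _ = (l : ℕ) := Fin.card_Iio l
  have h4 : (l : ℕ) + 1 ≤ S.card := by
    have hsub2 : (Finset.Iic l).image fA ⊆ S.image Prod.fst := by
      intro a ha
      obtain ⟨l', hl', rfl⟩ := Finset.mem_image.mp ha
      have haA : fA l' ∈ A := Finset.orderEmbOfFin_mem A hA l'
      obtain ⟨p, hp, hpa⟩ := Finset.mem_image.mp haA
      refine Finset.mem_image.mpr ⟨p, Finset.mem_filter.mpr ⟨hp, ?_⟩, hpa⟩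
      rw [hpa]
      exact fA.le_iff_le.mpr (Finset.mem_Iic.mp hl')
    calc (l : ℕ) + 1 = (Finset.Iic l).card := (Fin.card_Iic l).symm
      _ = ((Finset.Iic l).image fA).card :=
          (Finset.card_image_of_injective _ fA.injective).symm
      _ ≤ (S.image Prod.fst).card := Finset.card_le_card hsub2
      _ ≤ S.card := Finset.card_image_le
  have := Finset.card_le_card hsub
  omega

open Finset in
private lemma matching_exists_down {α β : Type*} [LinearOrder α] [LinearOrder β] [DecidableEq α] [DecidableEq β]
    (M : Finset (α × β)) (hsnd : Set.InjOn Prod.snd (M : Set (α × β)))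
    {k : ℕ} (hA : (M.image Prod.fst).card = k) (hB : (M.image Prod.snd).card = k)
    (l : Fin k) :
    ∃ p ∈ M, (M.image Prod.fst).orderEmbOfFin hA l ≤ p.1 ∧
      p.2 ≤ (M.image Prod.snd).orderEmbOfFin hB l := by
  classical
  by_contra h
  push_neg at h
  set A := M.image Prod.fst with hAdef
  set B := M.image Prod.snd with hBdef
  set fA := A.orderEmbOfFin hA with hfA
  set fB := B.orderEmbOfFin hB with hfB
  set S := M.filter (fun p => fA l ≤ p.1) with hSdef
  have hS1 : (S.image Prod.snd).card = S.card :=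
    Finset.card_image_of_injOn (hsnd.mono (Finset.coe_subset.mpr (Finset.filter_subset _ _)))
  have hsub : S.image Prod.snd ⊆ B.filter (fun b => fB l < b) := by
    intro b hb
    obtain ⟨p, hp, rfl⟩ := Finset.mem_image.mp hb
    rw [hSdef, Finset.mem_filter] at hp
    exact Finset.mem_filter.mpr ⟨Finset.mem_image_of_mem _ hp.1, h p hp.1 hp.2⟩
  have h3 : (B.filter (fun b => fB l < b)).card ≤ k - 1 - (l : ℕ) := by
    have hsub3 : B.filter (fun b => fB l < b) ⊆ (Finset.Ioi l).image fB := by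
      intro b hb
      rw [Finset.mem_filter] at hb
      obtain ⟨l', rfl⟩ : ∃ l', fB l' = b := by
        have hr := Finset.range_orderEmbOfFin B hB
        have : b ∈ Set.range fB := by rw [hr]; exact_mod_cast hb.1
        exact this
      exact Finset.mem_image.mpr ⟨l', Finset.mem_Ioi.mpr (fB.lt_iff_lt.mp hb.2), rfl⟩
    calc (B.filter (fun b => fB l < b)).card ≤ ((Finset.Ioi l).image fB).card :=
          Finset.card_le_card hsub3
      _ ≤ (Finset.Ioi l).card := Finset.card_image_le
      _ = k - 1 - (l : ℕ) := Fin.card_Ioi l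
  have h4 : k - (l : ℕ) ≤ S.card := by
    have hsub2 : (Finset.Ici l).image fA ⊆ S.image Prod.fst := by
      intro a ha
      obtain ⟨l', hl', rfl⟩ := Finset.mem_image.mp ha
      have haA : fA l' ∈ A := Finset.orderEmbOfFin_mem A hA l'
      obtain ⟨p, hp, hpa⟩ := Finset.mem_image.mp haA
      refine Finset.mem_image.mpr ⟨p, Finset.mem_filter.mpr ⟨hp, ?_⟩, hpa⟩
      rw [hpa]
      exact fA.le_iff_le.mpr (Finset.mem_Ici.mp hl')
    calc k - (l : ℕ) = (Finset.Ici l).card := (Fin.card_Ici l).symm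
      _ = ((Finset.Ici l).image fA).card :=
          (Finset.card_image_of_injective _ fA.injective).symm
      _ ≤ (S.image Prod.fst).card := Finset.card_le_card hsub2
      _ ≤ S.card := Finset.card_image_le
  have := Finset.card_le_card hsub
  have hl := l.isLt
  omega

/-- For sorted lists and any valid matching, there is a non-crossing
valid matching of the same cardinality. -/
theorem noncrossing_matching_same_card {n m : ℕ} (t : Fin n → ℝ) (s : Fin m → ℝ)
    (ht : Monotone t) (hs : Monotone s) (τmin τmax : ℝ) (hτ : τmin ≤ τmax)
    (M : Finset (Fin n × Fin m))
    (hinj : ∀ p ∈ M, ∀ q ∈ M, (p.1 = q.1 ∨ p.2 = q.2) → p = q)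
    (hvalid : ∀ p ∈ M, τmin ≤ s p.2 - t p.1 ∧ s p.2 - t p.1 ≤ τmax) :
    ∃ M' : Finset (Fin n × Fin m),
      (∀ p ∈ M', ∀ q ∈ M', (p.1 = q.1 ∨ p.2 = q.2) → p = q) ∧
      (∀ p ∈ M', τmin ≤ s p.2 - t p.1 ∧ s p.2 - t p.1 ≤ τmax) ∧
      (∀ p ∈ M', ∀ q ∈ M', p.1 < q.1 → p.2 < q.2) ∧
      M'.card = M.card := by
  classical
  have hfst : Set.InjOn Prod.fst M := fun p hp q hq h => hinj p hp q hq (Or.inl h)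
  have hsnd : Set.InjOn Prod.snd M := fun p hp q hq h => hinj p hp q hq (Or.inr h)
  have hA : (M.image Prod.fst).card = M.card := Finset.card_image_of_injOn hfst
  have hB : (M.image Prod.snd).card = M.card := Finset.card_image_of_injOn hsnd
  set fA := (M.image Prod.fst).orderEmbOfFin hA with hfA
  set fB := (M.image Prod.snd).orderEmbOfFin hB with hfB
  refine ⟨Finset.image (fun l => (fA l, fB l)) Finset.univ, ?_, ?_, ?_, ?_⟩
  · intro p hp q hq hpq
    obtain ⟨l, -, rfl⟩ := Finset.mem_image.mp hp
    obtain ⟨l', -, rfl⟩ := Finset.mem_image.mp hq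
    rcases hpq with h | h
    · have : l = l' := fA.injective h
      rw [this]
    · have : l = l' := fB.injective h
      rw [this]
  · intro p hp
    obtain ⟨l, -, rfl⟩ := Finset.mem_image.mp hp
    obtain ⟨q, hq, hq1, hq2⟩ := matching_exists_down M hsnd hA hB l
    obtain ⟨r, hr, hr1, hr2⟩ := matching_exists_up M hsnd hA hB l
    constructor
    · calc τmin ≤ s q.2 - t q.1 := (hvalid q hq).1
        _ ≤ s (fB l) - t (fA l) := by
            have := hs hq2; have := ht hq1; linarith
    · calc s (fB l) - t (fA l) ≤ s r.2 - t r.1 := by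
            have := hs hr2; have := ht hr1; linarith
        _ ≤ τmax := (hvalid r hr).2
  · intro p hp q hq hlt
    obtain ⟨l, -, rfl⟩ := Finset.mem_image.mp hp
    obtain ⟨l', -, rfl⟩ := Finset.mem_image.mp hq
    exact fB.lt_iff_lt.mpr (fA.lt_iff_lt.mp hlt)
  · rw [Finset.card_image_of_injective _ (fun l l' h => fA.injective (congrArg Prod.fst h)),
      Finset.card_univ, Fintype.card_fin]
end

section
/- Let L1, L2 be sorted lists of reals and τ_min ≤ τ_max. Define the greedy matching recursively: find the lexicographically earliest valid pair (i*, j*) (i.e., scan forward advancing whichever pointer violates the constraint, as in Algorithm-Chain), match it, and recurse on the suffixes L1[i*+1..], L2[j*+1..]. Then the greedy matching has maximum cardinality among all valid matchings. -/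
noncomputable def greedyCount (τmin τmax : ℝ) : List ℝ → List ℝ → ℕ
  | [], _ => 0
  | _ :: _, [] => 0
  | t :: ts, s :: ss =>
      if s - t < τmin then greedyCount τmin τmax (t :: ts) ss
      else if τmax < s - t then greedyCount τmin τmax ts (s :: ss)
      else 1 + greedyCount τmin τmax ts ss
  termination_by l1 l2 => l1.length + l2.length
  decreasing_by all_goals simp +arith +decide

def Valid (τmin τmax : ℝ) (l1 l2 : List ℝ) (M : Finset (ℕ × ℕ)) : Prop :=
  (∀ p ∈ M, p.1 < l1.length ∧ p.2 < l2.length ∧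
      τmin ≤ l2.getD p.2 0 - l1.getD p.1 0 ∧ l2.getD p.2 0 - l1.getD p.1 0 ≤ τmax) ∧
  (∀ p ∈ M, ∀ q ∈ M, (p.1 = q.1 ∨ p.2 = q.2) → p = q)

lemma head_le_getD {t : ℝ} {ts : List ℝ} (h : (t::ts).Pairwise (·≤·)) (i : ℕ)
    (hi : i < (t::ts).length) : t ≤ (t::ts).getD i 0 := by
  cases i with
  | zero => simp
  | succ n =>
    have hn : n < ts.length := by simpa using hi
    rw [List.getD_cons_succ, List.getD_eq_getElem _ _ hn]
    exact (List.pairwise_cons.mp h).1 _ (List.getElem_mem hn)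

lemma exists_valid (τmin τmax : ℝ) (l1 l2 : List ℝ) :
    ∃ M, Valid τmin τmax l1 l2 M ∧ M.card = greedyCount τmin τmax l1 l2 := by
  induction l1, l2 using greedyCount.induct τmin τmax with
  | case1 l2 =>
    exact ⟨∅, ⟨by simp, by simp⟩, by rw [greedyCount]; simp⟩
  | case2 t ts =>
    exact ⟨∅, ⟨by simp, by simp⟩, by rw [greedyCount]; simp⟩
  | case3 t ts s ss h ih =>
    obtain ⟨M, ⟨hv, hm⟩, hc⟩ := ih
    refine ⟨M.image (fun p => (p.1, p.2 + 1)), ⟨?_, ?_⟩, ?_⟩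
    · intro p hp
      simp only [Finset.mem_image] at hp
      obtain ⟨q, hq, rfl⟩ := hp
      obtain ⟨a, b, c, d⟩ := hv q hq
      refine ⟨a, by simpa using b, ?_, ?_⟩ <;>
        simpa only [List.getD_cons_succ] using ‹_›
    · intro p hp q hq hpq
      simp only [Finset.mem_image] at hp hq
      obtain ⟨p', hp', rfl⟩ := hp
      obtain ⟨q', hq', rfl⟩ := hq
      have : p' = q' := by
        apply hm p' hp' q' hq'
        simp only [Prod.mk.injEq] at hpq ⊢
        omega
      rw [this]
    · rw [Finset.card_image_of_injective _ (by intro a b hab; simpa [Prod.ext_iff] using hab),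
        hc, greedyCount]
      simp [h]
  | case4 t ts s ss h h2 ih =>
    obtain ⟨M, ⟨hv, hm⟩, hc⟩ := ih
    refine ⟨M.image (fun p => (p.1 + 1, p.2)), ⟨?_, ?_⟩, ?_⟩
    · intro p hp
      simp only [Finset.mem_image] at hp
      obtain ⟨q, hq, rfl⟩ := hp
      obtain ⟨a, b, c, d⟩ := hv q hq
      refine ⟨by simpa using a, b, ?_, ?_⟩ <;>
        simpa only [List.getD_cons_succ] using ‹_›
    · intro p hp q hq hpq
      simp only [Finset.mem_image] at hp hq
      obtain ⟨p', hp', rfl⟩ := hp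
      obtain ⟨q', hq', rfl⟩ := hq
      have : p' = q' := by
        apply hm p' hp' q' hq'
        simp only [Prod.mk.injEq] at hpq ⊢
        omega
      rw [this]
    · rw [Finset.card_image_of_injective _ (by intro a b hab; simpa [Prod.ext_iff] using hab),
        hc, greedyCount]
      simp [h, h2]
  | case5 t ts s ss h h2 ih =>
    obtain ⟨M, ⟨hv, hm⟩, hc⟩ := ih
    refine ⟨insert (0,0) (M.image (fun p => (p.1 + 1, p.2 + 1))), ⟨?_, ?_⟩, ?_⟩
    · intro p hp
      simp only [Finset.mem_insert, Finset.mem_image] at hp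
      rcases hp with rfl | ⟨q, hq, rfl⟩
      · simp only [List.getD_cons_zero, List.length_cons]
        refine ⟨by omega, by omega, by linarith, by linarith⟩
      · obtain ⟨a, b, c, d⟩ := hv q hq
        refine ⟨by simpa using a, by simpa using b, ?_, ?_⟩ <;>
          simpa only [List.getD_cons_succ] using ‹_›
    · intro p hp q hq hpq
      simp only [Finset.mem_insert, Finset.mem_image] at hp hq
      rcases hp with rfl | ⟨p', hp', rfl⟩ <;> rcases hq with rfl | ⟨q', hq', rfl⟩
      · rfl
      · simp at hpq
      · simp at hpq
      · have : p' = q' := by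
          apply hm p' hp' q' hq'
          simp only [Prod.mk.injEq] at hpq ⊢
          omega
        rw [this]
    · rw [Finset.card_insert_of_notMem (by simp), Finset.card_image_of_injective _
        (by intro a b hab; simpa [Prod.ext_iff] using hab), hc, greedyCount]
      simp [h, h2]; ring
lemma valid_bound (τmin τmax : ℝ) (l1 l2 : List ℝ) :
    l1.Pairwise (·≤·) → l2.Pairwise (·≤·) → ∀ M : Finset (ℕ×ℕ), Valid τmin τmax l1 l2 M →
      M.card ≤ greedyCount τmin τmax l1 l2 := by
  induction l1, l2 using greedyCount.induct τmin τmax with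
  | case1 l2 =>
    intro _ _ M hM
    have : M = ∅ := Finset.eq_empty_of_forall_notMem (fun p hp => by
      have := (hM.1 p hp).1; simp at this)
    simp [this]
  | case2 t ts =>
    intro _ _ M hM
    have : M = ∅ := Finset.eq_empty_of_forall_notMem (fun p hp => by
      have := (hM.1 p hp).2.1; simp at this)
    simp [this]
  | case3 t ts s ss h ih =>
    intro hs1 hs2 M hM
    obtain ⟨hv, hm⟩ := hM
    -- no pair uses column 0
    have hcol : ∀ p ∈ M, 1 ≤ p.2 := by
      intro p hp
      by_contra hc
      have hp2 : p.2 = 0 := by omega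
      obtain ⟨a, b, c, d⟩ := hv p hp
      rw [hp2, List.getD_cons_zero] at c
      have := head_le_getD hs1 p.1 a
      have hss : s ≤ s := le_refl s
      have : s ≤ (s::ss).getD 0 0 := by simp
      linarith [head_le_getD hs1 p.1 a]
    set N := M.image (fun p => (p.1, p.2 - 1)) with hN
    have hcard : N.card = M.card := by
      apply Finset.card_image_of_injOn
      intro p hp q hq hpq
      simp only [Prod.mk.injEq] at hpq
      exact hm p hp q hq (Or.inl hpq.1)
    have hvalid : Valid τmin τmax (t::ts) ss N := by
      constructor
      · intro p hp
        simp only [hN, Finset.mem_image] at hp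
        obtain ⟨q, hq, rfl⟩ := hp
        obtain ⟨a, b, c, d⟩ := hv q hq
        obtain ⟨k, hk⟩ : ∃ k, q.2 = k + 1 := ⟨q.2 - 1, by have := hcol q hq; omega⟩
        rw [hk, List.getD_cons_succ] at c d
        refine ⟨a, by simp at b; omega, ?_, ?_⟩
        · simp only [hk, Nat.add_sub_cancel]; exact c
        · simp only [hk, Nat.add_sub_cancel]; exact d
      · intro p hp q hq hpq
        simp only [hN, Finset.mem_image] at hp hq
        obtain ⟨p', hp', rfl⟩ := hp
        obtain ⟨q', hq', rfl⟩ := hq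
        have h1 := hcol p' hp'
        have h2 := hcol q' hq'
        have : p' = q' := by
          apply hm p' hp' q' hq'
          simp only [Prod.mk.injEq] at hpq ⊢
          omega
        rw [this]
    rw [greedyCount]
    simp only [h, if_pos]
    rw [← hcard]
    exact ih hs1 hs2.of_cons N hvalid
  | case4 t ts s ss h h2 ih =>
    intro hs1 hs2 M hM
    obtain ⟨hv, hm⟩ := hM
    have hrow : ∀ p ∈ M, 1 ≤ p.1 := by
      intro p hp
      by_contra hc
      have hp1 : p.1 = 0 := by omega
      obtain ⟨a, b, c, d⟩ := hv p hp
      rw [hp1, List.getD_cons_zero] at d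
      linarith [head_le_getD hs2 p.2 b]
    set N := M.image (fun p => (p.1 - 1, p.2)) with hN
    have hcard : N.card = M.card := by
      apply Finset.card_image_of_injOn
      intro p hp q hq hpq
      simp only [Prod.mk.injEq] at hpq
      exact hm p hp q hq (Or.inr hpq.2)
    have hvalid : Valid τmin τmax ts (s::ss) N := by
      constructor
      · intro p hp
        simp only [hN, Finset.mem_image] at hp
        obtain ⟨q, hq, rfl⟩ := hp
        obtain ⟨a, b, c, d⟩ := hv q hq
        obtain ⟨k, hk⟩ : ∃ k, q.1 = k + 1 := ⟨q.1 - 1, by have := hrow q hq; omega⟩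
        rw [hk, List.getD_cons_succ] at c d
        refine ⟨by simp at a; omega, b, ?_, ?_⟩
        · simp only [hk, Nat.add_sub_cancel]; exact c
        · simp only [hk, Nat.add_sub_cancel]; exact d
      · intro p hp q hq hpq
        simp only [hN, Finset.mem_image] at hp hq
        obtain ⟨p', hp', rfl⟩ := hp
        obtain ⟨q', hq', rfl⟩ := hq
        have h1 := hrow p' hp'
        have h2 := hrow q' hq'
        have : p' = q' := by
          apply hm p' hp' q' hq'
          simp only [Prod.mk.injEq] at hpq ⊢
          omega
        rw [this]
    rw [greedyCount]
    simp only [h, h2, if_neg, if_pos, not_false_iff]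
    rw [← hcard]
    exact ih hs1.of_cons hs2 N hvalid
  | case5 t ts s ss h h2 ih =>
    intro hs1 hs2 M hM
    obtain ⟨hv, hm⟩ := hM
    classical
    set R := M.filter (fun p => 1 ≤ p.1 ∧ 1 ≤ p.2) with hRdef
    have hRsub : R ⊆ M := Finset.filter_subset _ _
    have hRmem : ∀ p ∈ R, p ∈ M ∧ 1 ≤ p.1 ∧ 1 ≤ p.2 := by
      intro p hp; simpa [hRdef, Finset.mem_filter] using hp
    set N := R.image (fun p => (p.1 - 1, p.2 - 1)) with hNdef
    have hNcard : N.card = R.card := by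
      apply Finset.card_image_of_injOn
      intro p hp q hq hpq
      obtain ⟨hpM, hp1, hp2⟩ := hRmem p hp
      obtain ⟨hqM, hq1, hq2⟩ := hRmem q hq
      simp only [Prod.mk.injEq] at hpq
      apply hm p hpM q hqM
      left; omega
    have hNvalid : Valid τmin τmax ts ss N := by
      constructor
      · intro p hp
        simp only [hNdef, Finset.mem_image] at hp
        obtain ⟨q, hq, rfl⟩ := hp
        obtain ⟨hqM, hq1, hq2⟩ := hRmem q hq
        obtain ⟨a, b, c, d⟩ := hv q hqM
        obtain ⟨k, hk⟩ : ∃ k, q.1 = k + 1 := ⟨q.1 - 1, by omega⟩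
        obtain ⟨m, hmk⟩ : ∃ m, q.2 = m + 1 := ⟨q.2 - 1, by omega⟩
        rw [hk, hmk, List.getD_cons_succ, List.getD_cons_succ] at c d
        refine ⟨by simp at a; omega, by simp at b; omega, ?_, ?_⟩
        · simp only [hk, hmk, Nat.add_sub_cancel]; exact c
        · simp only [hk, hmk, Nat.add_sub_cancel]; exact d
      · intro p hp q hq hpq
        simp only [hNdef, Finset.mem_image] at hp hq
        obtain ⟨p', hp', rfl⟩ := hp
        obtain ⟨q', hq', rfl⟩ := hq
        obtain ⟨hpM, hp1, hp2⟩ := hRmem p' hp'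
        obtain ⟨hqM, hq1, hq2⟩ := hRmem q' hq'
        have : p' = q' := by
          apply hm p' hpM q' hqM
          simp only [Prod.mk.injEq] at hpq ⊢
          omega
        rw [this]
    have hsplit : (M \ R).card + R.card = M.card :=
      Finset.card_sdiff_add_card_eq_card hRsub
    have hBmem : ∀ p ∈ M \ R, p ∈ M ∧ (p.1 = 0 ∨ p.2 = 0) := by
      intro p hp
      rw [Finset.mem_sdiff] at hp
      refine ⟨hp.1, ?_⟩
      have := hp.2
      simp only [hRdef, Finset.mem_filter] at this
      push_neg at this
      have := this hp.1
      omega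
    rw [greedyCount]
    simp only [h, h2, if_neg, not_false_iff]
    -- case analysis
    by_cases hex : (∃ p ∈ M, p.1 = 0) ∧ (∃ q ∈ M, q.2 = 0)
    · obtain ⟨⟨p, hpM, hp0⟩, ⟨q, hqM, hq0⟩⟩ := hex
      by_cases hpq : p = q
      · -- (0,0) ∈ M, M \ R = {p}
        have hB1 : ∀ b ∈ M \ R, b = p := by
          intro b hb
          obtain ⟨hbM, hb0⟩ := hBmem b hb
          rcases hb0 with hb0 | hb0
          · exact hm b hbM p hpM (Or.inl (by omega))
          · exact hm b hbM q hqM (Or.inr (by omega)) |>.trans hpq.symm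
        have hBcard : (M \ R).card ≤ 1 :=
          Finset.card_le_one.mpr (fun a ha b hb => (hB1 a ha).trans (hB1 b hb).symm)
        have := ih hs1.of_cons hs2.of_cons N hNvalid
        omega
      · -- exchange case: p = (0, j), q = (i, 0), i,j ≥ 1
        have hj1 : 1 ≤ p.2 := by
          by_contra hc
          exact hpq (hm p hpM q hqM (Or.inr (by omega)))
        have hi1 : 1 ≤ q.1 := by
          by_contra hc
          exact hpq (hm p hpM q hqM (Or.inl (by omega)))
        have hpR : p ∉ R := by
          intro hc; have := (hRmem p hc).2.1; omega
        have hqR : q ∉ R := by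
          intro hc; have := (hRmem q hc).2.2; omega
        -- M \ R ⊆ {p, q}
        have hBsub : M \ R ⊆ {p, q} := by
          intro b hb
          obtain ⟨hbM, hb0⟩ := hBmem b hb
          simp only [Finset.mem_insert, Finset.mem_singleton]
          rcases hb0 with hb0 | hb0
          · exact Or.inl (hm b hbM p hpM (Or.inl (by omega)))
          · exact Or.inr (hm b hbM q hqM (Or.inr (by omega)))
        have hBcard : (M \ R).card ≤ 2 :=
          le_trans (Finset.card_le_card hBsub) (Finset.card_insert_le _ _ |>.trans (by simp))
        -- the exchanged pair
        obtain ⟨av, bv, cv, dv⟩ := hv p hpM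
        obtain ⟨av', bv', cv', dv'⟩ := hv q hqM
        rw [hp0, List.getD_cons_zero] at cv dv
        rw [hq0, List.getD_cons_zero] at cv' dv'
        set e : ℕ × ℕ := (q.1 - 1, p.2 - 1) with hedef
        have heN : e ∉ N := by
          intro hc
          simp only [hNdef, Finset.mem_image] at hc
          obtain ⟨r, hr, hre⟩ := hc
          obtain ⟨hrM, hr1, hr2⟩ := hRmem r hr
          simp only [hedef, Prod.mk.injEq] at hre
          have : r = q := hm r hrM q hqM (Or.inl (by omega))
          rw [this] at hr
          exact hqR hr
        have hN'valid : Valid τmin τmax ts ss (insert e N) := by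
          constructor
          · intro x hx
            rw [Finset.mem_insert] at hx
            rcases hx with rfl | hx
            · obtain ⟨k, hk⟩ : ∃ k, q.1 = k + 1 := ⟨q.1 - 1, by omega⟩
              obtain ⟨mm, hmm⟩ : ∃ m, p.2 = m + 1 := ⟨p.2 - 1, by omega⟩
              have hts : t ≤ (t::ts).getD q.1 0 := head_le_getD hs1 q.1 av'
              have hss : s ≤ (s::ss).getD p.2 0 := head_le_getD hs2 p.2 bv
              rw [hk, List.getD_cons_succ] at cv' hts
              rw [hmm, List.getD_cons_succ] at dv hss
              refine ⟨?_, ?_, ?_, ?_⟩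
              · simp only [hedef]; simp at av'; omega
              · simp only [hedef]; simp at bv; omega
              · simp only [hedef, hk, hmm]
                simp only [Nat.add_sub_cancel]
                linarith
              · simp only [hedef, hk, hmm]
                simp only [Nat.add_sub_cancel]
                linarith
            · exact hNvalid.1 x hx
          · intro x hx y hy hxy
            rw [Finset.mem_insert] at hx hy
            have key : ∀ z ∈ N, (z.1 = e.1 ∨ z.2 = e.2) → False := by
              intro z hz hze
              simp only [hNdef, Finset.mem_image] at hz
              obtain ⟨r, hr, hre⟩ := hz
              obtain ⟨hrM, hr1, hr2⟩ := hRmem r hr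
              rcases hze with hze | hze
              · have : r.1 - 1 = q.1 - 1 := by rw [← hre] at hze; simpa [hedef] using hze
                have : r = q := hm r hrM q hqM (Or.inl (by omega))
                exact hqR (this ▸ hr)
              · have : r.2 - 1 = p.2 - 1 := by rw [← hre] at hze; simpa [hedef] using hze
                have : r = p := hm r hrM p hpM (Or.inr (by omega))
                exact hpR (this ▸ hr)
            rcases hx with rfl | hx <;> rcases hy with rfl | hy
            · rfl
            · exact absurd (key y hy (by omega)) (by simp)
            · exact absurd (key x hx (by omega)) (by simp)
            · exact hNvalid.2 x hx y hy hxy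
        have hN'card : (insert e N).card = N.card + 1 := Finset.card_insert_of_notMem heN
        have := ih hs1.of_cons hs2.of_cons (insert e N) hN'valid
        omega
    · -- at most one boundary pair
      push_neg at hex
      have hB1 : ∀ a ∈ M \ R, ∀ b ∈ M \ R, a = b := by
        intro a ha b hb
        obtain ⟨haM, ha0⟩ := hBmem a ha
        obtain ⟨hbM, hb0⟩ := hBmem b hb
        by_cases hex1 : ∃ p ∈ M, p.1 = 0
        · have hnq := hex hex1
          have ha0' : a.2 ≠ 0 := fun hc => hnq a haM hc
          have hb0' : b.2 ≠ 0 := fun hc => hnq b hbM hc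
          exact hm a haM b hbM (Or.inl (by omega))
        · push_neg at hex1
          have ha0' : a.1 ≠ 0 := fun hc => hex1 a haM hc
          have hb0' : b.1 ≠ 0 := fun hc => hex1 b hbM hc
          exact hm a haM b hbM (Or.inr (by omega))
      have hBcard : (M \ R).card ≤ 1 := Finset.card_le_one.mpr hB1
      have := ih hs1.of_cons hs2.of_cons N hNvalid
      omega

open Classical in
/-- for sorted lists, the greedy matching has maximum cardinality
among all valid matchings: its size is achieved by a valid matching, and no
valid matching is larger. -/
theorem greedy_is_maximum (τmin τmax : ℝ) (hτ : τmin ≤ τmax) (l1 l2 : List ℝ)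
    (h1 : l1.Pairwise (· ≤ ·)) (h2 : l2.Pairwise (· ≤ ·)) :
    (∃ M : Finset (ℕ × ℕ),
      (∀ p ∈ M, p.1 < l1.length ∧ p.2 < l2.length ∧
        τmin ≤ l2.getD p.2 0 - l1.getD p.1 0 ∧ l2.getD p.2 0 - l1.getD p.1 0 ≤ τmax) ∧
      (∀ p ∈ M, ∀ q ∈ M, (p.1 = q.1 ∨ p.2 = q.2) → p = q) ∧
      M.card = greedyCount τmin τmax l1 l2) ∧
    (∀ M : Finset (ℕ × ℕ),
      (∀ p ∈ M, p.1 < l1.length ∧ p.2 < l2.length ∧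
        τmin ≤ l2.getD p.2 0 - l1.getD p.1 0 ∧ l2.getD p.2 0 - l1.getD p.1 0 ≤ τmax) →
      (∀ p ∈ M, ∀ q ∈ M, (p.1 = q.1 ∨ p.2 = q.2) → p = q) →
      M.card ≤ greedyCount τmin τmax l1 l2) := by
  constructor
  · obtain ⟨M, ⟨hv, hm⟩, hc⟩ := exists_valid τmin τmax l1 l2
    exact ⟨M, hv, hm, hc⟩
  · intro M hv hm
    exact valid_bound τmin τmax l1 l2 h1 h2 M ⟨hv, hm⟩
end

section
/- Let L1, L2 be sorted lists of reals and τ_min ≤ τ_max. If (t_{i_1}, s_{j_1}) is the earliest valid pair (found by the greedy pointer-advancing procedure) and (t_{i'}, s_{j'}) is any valid pair, then i_1 ≤ i' and j_1 ≤ j'. -/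
/-- for sorted lists, if any valid pair exists then there exists a
componentwise-minimal (earliest) valid pair: one dominated by every valid pair. -/
theorem earliest_valid_pair {n m : ℕ} (t : Fin n → ℝ) (s : Fin m → ℝ)
    (ht : Monotone t) (hs : Monotone s) (τmin τmax : ℝ) (hτ : τmin ≤ τmax)
    (hex : ∃ i j, τmin ≤ s j - t i ∧ s j - t i ≤ τmax) :
    ∃ i₁ j₁, (τmin ≤ s j₁ - t i₁ ∧ s j₁ - t i₁ ≤ τmax) ∧
      ∀ i' j', (τmin ≤ s j' - t i' ∧ s j' - t i' ≤ τmax) → i₁ ≤ i' ∧ j₁ ≤ j' := by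
  classical
  obtain ⟨i0, j0, h0⟩ := hex
  obtain ⟨i₁, hi₁mem, hi₁min⟩ :=
    (Finset.univ.filter fun i => ∃ j, τmin ≤ s j - t i ∧ s j - t i ≤ τmax).exists_min_image
      id ⟨i0, by simp only [Finset.mem_filter, Finset.mem_univ, true_and]; exact ⟨j0, h0⟩⟩
  obtain ⟨j₁, hj₁mem, hj₁min⟩ :=
    (Finset.univ.filter fun j => ∃ i, τmin ≤ s j - t i ∧ s j - t i ≤ τmax).exists_min_image
      id ⟨j0, by simp only [Finset.mem_filter, Finset.mem_univ, true_and]; exact ⟨i0, h0⟩⟩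
  simp only [Finset.mem_filter, Finset.mem_univ, true_and] at hi₁mem hj₁mem
  obtain ⟨ja, hja⟩ := hi₁mem
  obtain ⟨ib, hib⟩ := hj₁mem
  have hij1 : i₁ ≤ ib := hi₁min ib
    (by simp only [Finset.mem_filter, Finset.mem_univ, true_and]; exact ⟨j₁, hib⟩)
  have hji1 : j₁ ≤ ja := hj₁min ja
    (by simp only [Finset.mem_filter, Finset.mem_univ, true_and]; exact ⟨i₁, hja⟩)
  have h1 := ht hij1
  have h2 := hs hji1
  refine ⟨i₁, j₁, ⟨by linarith [hib.1], by linarith [hja.2]⟩, ?_⟩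
  intro i' j' h'
  exact ⟨hi₁min i' (by simp only [Finset.mem_filter, Finset.mem_univ, true_and]; exact ⟨j', h'⟩),
    hj₁min j' (by simp only [Finset.mem_filter, Finset.mem_univ, true_and]; exact ⟨i', h'⟩)⟩
end

section
/- Let f : ℝ → ℝ be strictly monotonically decreasing with f(s_m - t_1) > 0, and let L1 = (t_1 < ... < t_n), L2 = (s_1 < ... < s_m) be sorted lists of reals with s_j > t_n for all j. Then in every maximum-weight non-crossing matching (with score f(s - t) for a pair matching time t to time s), the element t_n is matched. -/
/-- for a strictly decreasing weight function `f` with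
`f (s_m - t_1) > 0` and all of `L2` after all of `L1`, every maximum-weight
non-crossing matching matches the last element `t_n` of `L1`. -/
theorem last_matched_in_max_weight_matching {n m : ℕ} (f : ℝ → ℝ)
    (hf : StrictAnti f) (t : Fin (n + 1) → ℝ) (s : Fin (m + 1) → ℝ)
    (ht : StrictMono t) (hs : StrictMono s)
    (hsep : ∀ j, t (Fin.last n) < s j)
    (hpos : 0 < f (s (Fin.last m) - t 0))
    (M : Finset (Fin (n + 1) × Fin (m + 1)))
    (hinj : ∀ p ∈ M, ∀ q ∈ M, (p.1 = q.1 ∨ p.2 = q.2) → p = q)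
    (hnc : ∀ p ∈ M, ∀ q ∈ M, p.1 < q.1 → p.2 < q.2)
    (hmax : ∀ M' : Finset (Fin (n + 1) × Fin (m + 1)),
      (∀ p ∈ M', ∀ q ∈ M', (p.1 = q.1 ∨ p.2 = q.2) → p = q) →
      (∀ p ∈ M', ∀ q ∈ M', p.1 < q.1 → p.2 < q.2) →
      (∑ p ∈ M', f (s p.2 - t p.1)) ≤ ∑ p ∈ M, f (s p.2 - t p.1)) :
    ∃ j, (Fin.last n, j) ∈ M := by
  by_contra hcon
  push_neg at hcon
  rcases M.eq_empty_or_nonempty with hM | hM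
  · have hle := hmax {(Fin.last n, Fin.last m)} (by simp) (by simp)
    rw [hM] at hle
    simp only [Finset.sum_singleton, Finset.sum_empty] at hle
    have h1 : f (s (Fin.last m) - t 0) ≤ f (s (Fin.last m) - t (Fin.last n)) := by
      apply hf.antitone
      have := ht.monotone (Fin.zero_le (Fin.last n))
      linarith
    linarith
  · obtain ⟨p₀, hp₀, hmaxp⟩ := M.exists_max_image (·.1) hM
    obtain ⟨i, j⟩ := p₀
    have hilt : i < Fin.last n :=
      lt_of_le_of_ne (Fin.le_last i) (fun he => hcon j (he ▸ hp₀))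
    have hkey : ∀ q ∈ M.erase (i, j), q.1 < i ∧ q.2 < j := by
      intro q hq
      have hqM := Finset.mem_of_mem_erase hq
      have hqne := Finset.ne_of_mem_erase hq
      have h1 : q.1 < i := by
        rcases lt_or_eq_of_le (hmaxp q hqM) with h1 | h1
        · exact h1
        · exact absurd (hinj q hqM (i, j) hp₀ (Or.inl h1)) hqne
      exact ⟨h1, hnc q hqM (i, j) hp₀ h1⟩
    have haM : (Fin.last n, j) ∉ M.erase (i, j) :=
      fun hx => hcon j (Finset.mem_of_mem_erase hx)
    set M' := insert (Fin.last n, j) (M.erase (i, j)) with hM'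
    have hinj' : ∀ p ∈ M', ∀ q ∈ M', (p.1 = q.1 ∨ p.2 = q.2) → p = q := by
      intro p hp q hq hpq
      rcases Finset.mem_insert.1 hp with hp | hp <;>
        rcases Finset.mem_insert.1 hq with hq | hq
      · rw [hp, hq]
      · exfalso
        obtain ⟨h1, h2⟩ := hkey q hq
        subst hp
        rcases hpq with he | he
        · exact absurd he (ne_of_gt (lt_trans h1 hilt))
        · exact absurd he (ne_of_gt h2)
      · exfalso
        obtain ⟨h1, h2⟩ := hkey p hp
        subst hq
        rcases hpq with he | he
        · exact absurd he (ne_of_lt (lt_trans h1 hilt))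
        · exact absurd he (ne_of_lt h2)
      · exact hinj p (Finset.mem_of_mem_erase hp) q (Finset.mem_of_mem_erase hq) hpq
    have hnc' : ∀ p ∈ M', ∀ q ∈ M', p.1 < q.1 → p.2 < q.2 := by
      intro p hp q hq hpq
      rcases Finset.mem_insert.1 hp with hp | hp <;>
        rcases Finset.mem_insert.1 hq with hq | hq
      · rw [hp, hq] at hpq; exact absurd hpq (lt_irrefl _)
      · exfalso
        obtain ⟨h1, _⟩ := hkey q hq
        subst hp
        exact absurd hpq (not_lt.2 (le_of_lt (lt_trans h1 hilt)))
      · subst hq; exact (hkey p hp).2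
      · exact hnc p (Finset.mem_of_mem_erase hp) q (Finset.mem_of_mem_erase hq) hpq
    have hle := hmax M' hinj' hnc'
    rw [hM', Finset.sum_insert haM] at hle
    have hsum : ∑ p ∈ M.erase (i, j), f (s p.2 - t p.1) + f (s j - t i)
        = ∑ p ∈ M, f (s p.2 - t p.1) := Finset.sum_erase_add M _ hp₀
    have hlt : f (s j - t i) < f (s j - t (Fin.last n)) := by
      apply hf
      have := ht hilt
      linarith
    linarith
end

section
/- The Jaccard distance d(S, S') = 1 - |S ∩ S'| / |S ∪ S'| (with d(∅, ∅) = 0) satisfies the triangle inequality on finite sets: for all finite sets S, S', S'', d(S, S'') ≤ d(S, S') + d(S', S''). -/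
/-- Jaccard distance between finite sets, with the convention `d(∅,∅) = 0`. -/
noncomputable def jaccardDist {α : Type*} [DecidableEq α] (S S' : Finset α) : ℝ :=
  if S ∪ S' = ∅ then 0 else 1 - ((S ∩ S').card : ℝ) / ((S ∪ S').card : ℝ)

lemma jaccard_aux (p q r s s1 s2 : ℝ) (hp : 0 ≤ p) (hq : 0 ≤ q) (hr : 0 ≤ r) (hs : 0 ≤ s)
    (hps : 0 < p + s) (hqs : 0 < q + s1) (hrs : 0 < r + s2)
    (htri : p ≤ q + r) (h1 : s1 ≤ s + r) (h2 : s2 ≤ s + q) :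
    1 - s / (p + s) ≤ (1 - s1 / (q + s1)) + (1 - s2 / (r + s2)) := by
  have e1 : 1 - s / (p + s) = p / (p + s) := by field_simp; ring
  have e2 : 1 - s1 / (q + s1) = q / (q + s1) := by field_simp; ring
  have e3 : 1 - s2 / (r + s2) = r / (r + s2) := by field_simp; ring
  rw [e1, e2, e3]
  have hqrs : 0 < q + r + s := by linarith
  have step1 : p / (p + s) ≤ (q + r) / (q + r + s) := by
    rw [div_le_div_iff₀ hps hqrs]; nlinarith
  have step2 : q / (q + r + s) ≤ q / (q + s1) :=
    div_le_div_of_nonneg_left hq hqs (by linarith)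
  have step3 : r / (q + r + s) ≤ r / (r + s2) :=
    div_le_div_of_nonneg_left hr hrs (by linarith)
  calc p / (p + s) ≤ (q + r) / (q + r + s) := step1
    _ = q / (q + r + s) + r / (q + r + s) := by ring
    _ ≤ q / (q + s1) + r / (r + s2) := add_le_add step2 step3

lemma card_union_eq_symmDiff_add_inter {α : Type*} [DecidableEq α] (A B : Finset α) :
    (A ∪ B).card = (symmDiff A B).card + (A ∩ B).card := by
  have h := symmDiff_sup_inf A B
  rw [Finset.sup_eq_union, Finset.sup_eq_union, Finset.inf_eq_inter] at h
  rw [← h, Finset.card_union_of_disjoint]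
  exact disjoint_symmDiff_inf A B

lemma card_symmDiff_triangle {α : Type*} [DecidableEq α] (A B C : Finset α) :
    (symmDiff A C).card ≤ (symmDiff A B).card + (symmDiff B C).card := by
  refine le_trans (Finset.card_le_card ?_) (Finset.card_union_le _ _)
  have := symmDiff_triangle A B C
  rwa [Finset.sup_eq_union] at this

lemma card_inter_le_aux {α : Type*} [DecidableEq α] (A B C : Finset α) :
    (A ∩ B).card ≤ (A ∩ C).card + (symmDiff B C).card := by
  refine le_trans (Finset.card_le_card ?_) (Finset.card_union_le _ _)
  intro x hx
  simp only [Finset.mem_union, Finset.mem_inter, Finset.mem_symmDiff] at *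
  tauto

lemma jaccardDist_nonneg {α : Type*} [DecidableEq α] (S S' : Finset α) :
    0 ≤ jaccardDist S S' := by
  unfold jaccardDist
  split
  · exact le_refl 0
  · rename_i h
    have hpos : 0 < ((S ∪ S').card : ℝ) := by
      exact_mod_cast Finset.card_pos.mpr (Finset.nonempty_iff_ne_empty.mpr h)
    have hle : ((S ∩ S').card : ℝ) ≤ ((S ∪ S').card : ℝ) := by
      exact_mod_cast Finset.card_le_card (Finset.inter_subset_union)
    have := (div_le_one hpos).mpr hle
    linarith

/-- the Jaccard distance satisfies the triangle inequality. -/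
theorem jaccardDist_triangle {α : Type*} [DecidableEq α] (S S' S'' : Finset α) :
    jaccardDist S S'' ≤ jaccardDist S S' + jaccardDist S' S'' := by
  by_cases h1 : S ∪ S' = ∅
  · obtain ⟨hS, hS'⟩ := Finset.union_eq_empty.mp h1
    subst hS; subst hS'
    simp [jaccardDist]
  by_cases h2 : S' ∪ S'' = ∅
  · obtain ⟨hS', hS''⟩ := Finset.union_eq_empty.mp h2
    subst hS'; subst hS''
    simp [jaccardDist]
  by_cases h3 : S ∪ S'' = ∅
  · have : jaccardDist S S'' = 0 := by simp [jaccardDist, h3]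
    rw [this]
    exact add_nonneg (jaccardDist_nonneg _ _) (jaccardDist_nonneg _ _)
  · unfold jaccardDist
    rw [if_neg h3, if_neg h1, if_neg h2]
    rw [card_union_eq_symmDiff_add_inter S S'', card_union_eq_symmDiff_add_inter S S',
      card_union_eq_symmDiff_add_inter S' S'']
    push_cast
    have key : ∀ A B : Finset α, A ∪ B ≠ ∅ →
        (0:ℝ) < ((symmDiff A B).card : ℝ) + ((A ∩ B).card : ℝ) := by
      intro A B h
      have : 0 < (A ∪ B).card := Finset.card_pos.mpr (Finset.nonempty_iff_ne_empty.mpr h)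
      rw [card_union_eq_symmDiff_add_inter] at this
      exact_mod_cast this
    apply jaccard_aux _ _ _ _ _ _ (by positivity) (by positivity) (by positivity) (by positivity)
      (key S S'' h3) (key S S' h1) (key S' S'' h2)
    · exact_mod_cast card_symmDiff_triangle S S' S''
    · exact_mod_cast card_inter_le_aux S S' S''
    · have := card_inter_le_aux S'' S' S
      rw [Finset.inter_comm S'' S', Finset.inter_comm S'' S, symmDiff_comm S' S] at this
      exact_mod_cast this
end

section
/- Let τ_min ≤ τ_max and let L1, L2 be sorted lists of reals. Define the maximum matching size function μ(L1, L2) as the maximum cardinality of a valid matching (pairs (t,s) with s - t ∈ [τ_min, τ_max], using each list element at most once). If (t*, s*) is the componentwise-earliest valid pair, then μ(L1, L2) = 1 + μ(L1', L2'), where L1' and L2' are the suffixes of L1 and L2 strictly after t* and s* respectively. -/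
lemma getD_drop' (l : List ℝ) (d p : ℕ) (h : d + p < l.length) :
    (l.drop d).getD p 0 = l.getD (d + p) 0 := by
  rw [List.getD_eq_getElem _ _ (by simp [List.length_drop]; omega),
      List.getD_eq_getElem _ _ h]
  simp [List.getElem_drop]

lemma sorted_getD_mono (l : List ℝ) (h : l.Pairwise (· ≤ ·)) {a b : ℕ}
    (hab : a ≤ b) (hb : b < l.length) : l.getD a 0 ≤ l.getD b 0 := by
  rcases eq_or_lt_of_le hab with rfl | h'
  · exact le_refl _
  · rw [List.getD_eq_getElem _ _ (lt_trans h' hb), List.getD_eq_getElem _ _ hb]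
    exact List.pairwise_iff_get.mp h ⟨a, lt_trans h' hb⟩ ⟨b, hb⟩ h'



open Classical in
/-- Maximum cardinality of a valid matching between two lists of reals:
pairs `(i,j)` of indices with `l2[j] - l1[i] ∈ [τmin, τmax]`, each index used
at most once. -/
noncomputable def maxMatch (τmin τmax : ℝ) (l1 l2 : List ℝ) : ℕ :=
  ((Finset.range l1.length ×ˢ Finset.range l2.length).powerset.filter
    (fun M => (∀ p ∈ M, ∀ q ∈ M, (p.1 = q.1 ∨ p.2 = q.2) → p = q) ∧
      ∀ p ∈ M, τmin ≤ l2.getD p.2 0 - l1.getD p.1 0 ∧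
        l2.getD p.2 0 - l1.getD p.1 0 ≤ τmax)).sup Finset.card

lemma le_maxMatch (τmin τmax : ℝ) (l1 l2 : List ℝ) (N : Finset (ℕ × ℕ))
    (hsub : ∀ p ∈ N, p.1 < l1.length ∧ p.2 < l2.length)
    (hinj : ∀ p ∈ N, ∀ q ∈ N, (p.1 = q.1 ∨ p.2 = q.2) → p = q)
    (hval : ∀ p ∈ N, τmin ≤ l2.getD p.2 0 - l1.getD p.1 0 ∧
      l2.getD p.2 0 - l1.getD p.1 0 ≤ τmax) :
    N.card ≤ maxMatch τmin τmax l1 l2 := by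
  classical
  refine Finset.le_sup ?_
  simp only [Finset.mem_filter, Finset.mem_powerset]
  refine ⟨fun p hp => ?_, hinj, hval⟩
  simp only [Finset.mem_product, Finset.mem_range]
  exact hsub p hp

lemma shift_le_maxMatch (τmin τmax : ℝ) (l1 l2 : List ℝ) (i j : ℕ)
    (N0 : Finset (ℕ × ℕ))
    (hb : ∀ x ∈ N0, i + 1 ≤ x.1 ∧ j + 1 ≤ x.2 ∧ x.1 < l1.length ∧ x.2 < l2.length)
    (hinj : ∀ p ∈ N0, ∀ q ∈ N0, (p.1 = q.1 ∨ p.2 = q.2) → p = q)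
    (hval : ∀ p ∈ N0, τmin ≤ l2.getD p.2 0 - l1.getD p.1 0 ∧
      l2.getD p.2 0 - l1.getD p.1 0 ≤ τmax) :
    N0.card ≤ maxMatch τmin τmax (l1.drop (i + 1)) (l2.drop (j + 1)) := by
  classical
  set sh : ℕ × ℕ → ℕ × ℕ := fun p => (p.1 - (i + 1), p.2 - (j + 1)) with hsh
  have hcard : (N0.image sh).card = N0.card := by
    apply Finset.card_image_of_injOn
    intro x hx y hy hxy
    obtain ⟨hx1, hx2, -, -⟩ := hb x hx
    obtain ⟨hy1, hy2, -, -⟩ := hb y hy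
    have e1 : x.1 - (i+1) = y.1 - (i+1) := congrArg Prod.fst hxy
    have e2 : x.2 - (j+1) = y.2 - (j+1) := congrArg Prod.snd hxy
    exact Prod.ext (by omega) (by omega)
  rw [← hcard]
  apply le_maxMatch
  · intro p hp
    obtain ⟨x, hx, rfl⟩ := Finset.mem_image.mp hp
    obtain ⟨hx1, hx2, hx3, hx4⟩ := hb x hx
    simp only [sh, List.length_drop]
    constructor <;> omega
  · intro p hp q hq hpq
    obtain ⟨x, hx, rfl⟩ := Finset.mem_image.mp hp
    obtain ⟨y, hy, rfl⟩ := Finset.mem_image.mp hq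
    obtain ⟨hx1, hx2, -, -⟩ := hb x hx
    obtain ⟨hy1, hy2, -, -⟩ := hb y hy
    have : x = y := by
      apply hinj x hx y hy
      simp only [sh] at hpq
      rcases hpq with h | h
      · exact Or.inl (by omega)
      · exact Or.inr (by omega)
    rw [this]
  · intro p hp
    obtain ⟨x, hx, rfl⟩ := Finset.mem_image.mp hp
    obtain ⟨hx1, hx2, hx3, hx4⟩ := hb x hx
    have e1 : (l1.drop (i+1)).getD (x.1 - (i+1)) 0 = l1.getD x.1 0 := by
      rw [getD_drop' _ _ _ (by omega)]
      congr 1; omega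
    have e2 : (l2.drop (j+1)).getD (x.2 - (j+1)) 0 = l2.getD x.2 0 := by
      rw [getD_drop' _ _ _ (by omega)]
      congr 1; omega
    simpa only [sh, e1, e2] using hval x hx

/-- if `(i*, j*)` is the componentwise-earliest valid pair, then
`μ(L1, L2) = 1 + μ(L1', L2')` where `L1', L2'` are the suffixes strictly after
positions `i*` and `j*`. -/
theorem maxMatch_earliest_recursion (τmin τmax : ℝ) (hτ : τmin ≤ τmax)
    (l1 l2 : List ℝ) (h1 : l1.Pairwise (· ≤ ·)) (h2 : l2.Pairwise (· ≤ ·))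
    (i j : ℕ) (hi : i < l1.length) (hj : j < l2.length)
    (hvalid : τmin ≤ l2.getD j 0 - l1.getD i 0 ∧ l2.getD j 0 - l1.getD i 0 ≤ τmax)
    (hearliest : ∀ i' j', i' < l1.length → j' < l2.length →
      (τmin ≤ l2.getD j' 0 - l1.getD i' 0 ∧ l2.getD j' 0 - l1.getD i' 0 ≤ τmax) →
      i ≤ i' ∧ j ≤ j') :
    maxMatch τmin τmax l1 l2 =
      1 + maxMatch τmin τmax (l1.drop (i + 1)) (l2.drop (j + 1)) := by
  classical
  apply le_antisymm
  · -- ≤ direction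
    rw [maxMatch]
    apply Finset.sup_le
    intro M hM
    simp only [Finset.mem_filter, Finset.mem_powerset] at hM
    obtain ⟨hsub, hinj, hval⟩ := hM
    have hbounds : ∀ p ∈ M, i ≤ p.1 ∧ j ≤ p.2 ∧ p.1 < l1.length ∧ p.2 < l2.length := by
      intro p hp
      have := hsub hp
      simp only [Finset.mem_product, Finset.mem_range] at this
      obtain ⟨h1', h2'⟩ := this
      obtain ⟨he1, he2⟩ := hearliest p.1 p.2 h1' h2' (hval p hp)
      exact ⟨he1, he2, h1', h2'⟩
    by_cases hcase : ∃ p ∈ M, ∃ q ∈ M, p.1 = i ∧ q.2 = j ∧ p ≠ q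
    · obtain ⟨p, hp, q, hq, hpi, hqj, hpq⟩ := hcase
      have hqi : q.1 ≠ i := fun h => hpq (hinj p hp q hq (Or.inl (hpi.trans h.symm)))
      have hpj : p.2 ≠ j := fun h => hpq (hinj p hp q hq (Or.inr (h.trans hqj.symm)))
      obtain ⟨-, hp2, -, hp4⟩ := hbounds p hp
      obtain ⟨hq1, -, hq3, -⟩ := hbounds q hq
      set M'' : Finset (ℕ × ℕ) := (M.erase p).erase q with hM''
      have hM''sub : M'' ⊆ M := (Finset.erase_subset _ _).trans (Finset.erase_subset _ _)
      have hrM : (q.1, p.2) ∉ M := by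
        intro hrm
        have : (q.1, p.2) = q := hinj _ hrm q hq (Or.inl rfl)
        have : p.2 = j := by rw [← hqj, ← this]
        exact hpj this
      have hrM'' : (q.1, p.2) ∉ M'' := fun h => hrM (hM''sub h)
      have hqp : q ∈ M.erase p := Finset.mem_erase.mpr ⟨Ne.symm hpq, hq⟩
      have hcard'' : M''.card = M.card - 2 := by
        have c1 : (M.erase p).card = M.card - 1 := Finset.card_erase_of_mem hp
        have c2 : M''.card = (M.erase p).card - 1 := Finset.card_erase_of_mem hqp
        omega
      have hcardM : 2 ≤ M.card := Finset.one_lt_card.mpr ⟨p, hp, q, hq, hpq⟩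
      set N0 : Finset (ℕ × ℕ) := insert (q.1, p.2) M'' with hN0
      have hcardN0 : N0.card = M.card - 1 := by
        rw [hN0, Finset.card_insert_of_notMem hrM'', hcard'']; omega
      have hM''coords : ∀ x ∈ M'', x.1 ≠ i ∧ x.2 ≠ j ∧ x.1 ≠ q.1 ∧ x.2 ≠ p.2 := by
        intro x hx
        have hxM := hM''sub hx
        have hxp : x ≠ p := Finset.ne_of_mem_erase (Finset.mem_of_mem_erase (by rwa [hM''] at hx) )
        have hxq : x ≠ q := Finset.ne_of_mem_erase (by rwa [hM''] at hx)
        refine ⟨fun h => hxp (hinj x hxM p hp (Or.inl (h.trans hpi.symm))),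
            fun h => hxq (hinj x hxM q hq (Or.inr (h.trans hqj.symm))),
            fun h => hxq (hinj x hxM q hq (Or.inl h)),
            fun h => hxp (hinj x hxM p hp (Or.inr h))⟩
      have hrval : τmin ≤ l2.getD p.2 0 - l1.getD q.1 0 ∧
          l2.getD p.2 0 - l1.getD q.1 0 ≤ τmax := by
        obtain ⟨hpv1, hpv2⟩ := hval p hp
        obtain ⟨hqv1, hqv2⟩ := hval q hq
        rw [hpi] at hpv1 hpv2
        rw [hqj] at hqv1 hqv2
        have ht : l1.getD i 0 ≤ l1.getD q.1 0 := sorted_getD_mono l1 h1 hq1 hq3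
        have hs : l2.getD j 0 ≤ l2.getD p.2 0 := sorted_getD_mono l2 h2 hp2 hp4
        constructor
        · calc τmin ≤ l2.getD j 0 - l1.getD q.1 0 := hqv1
            _ ≤ l2.getD p.2 0 - l1.getD q.1 0 := by linarith
        · calc l2.getD p.2 0 - l1.getD q.1 0 ≤ l2.getD p.2 0 - l1.getD i 0 := by linarith
            _ ≤ τmax := hpv2
      have hN0b : ∀ x ∈ N0, i + 1 ≤ x.1 ∧ j + 1 ≤ x.2 ∧ x.1 < l1.length ∧ x.2 < l2.length := by
        intro x hx
        rcases Finset.mem_insert.mp hx with rfl | hx'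
        · exact ⟨by dsimp only; omega, by dsimp only; omega, hq3, hp4⟩
        · obtain ⟨h1', h2', -, -⟩ := hM''coords x hx'
          obtain ⟨hb1, hb2, hb3, hb4⟩ := hbounds x (hM''sub hx')
          exact ⟨by omega, by omega, hb3, hb4⟩
      have hN0inj : ∀ a ∈ N0, ∀ b ∈ N0, (a.1 = b.1 ∨ a.2 = b.2) → a = b := by
        intro a ha b hb hab
        rcases Finset.mem_insert.mp ha with rfl | ha' <;>
          rcases Finset.mem_insert.mp hb with rfl | hb'
        · rfl
        · obtain ⟨-, -, h3, h4⟩ := hM''coords b hb'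
          rcases hab with h | h
          · exact absurd h.symm h3
          · exact absurd h.symm h4
        · obtain ⟨-, -, h3, h4⟩ := hM''coords a ha'
          rcases hab with h | h
          · exact absurd h h3
          · exact absurd h h4
        · exact hinj a (hM''sub ha') b (hM''sub hb') hab
      have hN0val : ∀ x ∈ N0, τmin ≤ l2.getD x.2 0 - l1.getD x.1 0 ∧
          l2.getD x.2 0 - l1.getD x.1 0 ≤ τmax := by
        intro x hx
        rcases Finset.mem_insert.mp hx with rfl | hx'
        · exact hrval
        · exact hval x (hM''sub hx')
      have := shift_le_maxMatch τmin τmax l1 l2 i j N0 hN0b hN0inj hN0val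
      omega
    · push_neg at hcase
      set M'' : Finset (ℕ × ℕ) := M.filter (fun x => x.1 ≠ i ∧ x.2 ≠ j) with hM''
      have hM''sub : M'' ⊆ M := Finset.filter_subset _ _
      have hsmall : (M.filter (fun x => ¬(x.1 ≠ i ∧ x.2 ≠ j))).card ≤ 1 := by
        apply Finset.card_le_one.mpr
        intro a ha b hb
        simp only [Finset.mem_filter, not_and, not_not, ne_eq] at ha hb
        obtain ⟨haM, hac⟩ := ha
        obtain ⟨hbM, hbc⟩ := hb
        by_cases ha1 : a.1 = i
        · by_cases hb1 : b.1 = i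
          · exact hinj a haM b hbM (Or.inl (ha1.trans hb1.symm))
          · have hb2 : b.2 = j := hbc hb1
            by_contra hne
            exact hne (hcase a haM b hbM ha1 hb2)
        · have ha2 : a.2 = j := hac ha1
          by_cases hb1 : b.1 = i
          · by_contra hne
            exact Ne.symm hne (hcase b hbM a haM hb1 ha2)
          · have hb2 : b.2 = j := hbc hb1
            exact hinj a haM b hbM (Or.inr (ha2.trans hb2.symm))
      have hsplit := Finset.card_filter_add_card_filter_not
        (s := M) (p := fun x => x.1 ≠ i ∧ x.2 ≠ j)
      have hcard'' : M.card ≤ M''.card + 1 := by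
        rw [hM'']; omega
      have hN0b : ∀ x ∈ M'', i + 1 ≤ x.1 ∧ j + 1 ≤ x.2 ∧ x.1 < l1.length ∧ x.2 < l2.length := by
        intro x hx
        obtain ⟨hxM, hx1, hx2⟩ := Finset.mem_filter.mp hx
        obtain ⟨hb1, hb2, hb3, hb4⟩ := hbounds x hxM
        exact ⟨by omega, by omega, hb3, hb4⟩
      have := shift_le_maxMatch τmin τmax l1 l2 i j M''
        hN0b (fun a ha b hb => hinj a (hM''sub ha) b (hM''sub hb))
        (fun x hx => hval x (hM''sub hx))
      omega
  · -- ≥ direction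
    have hne : (((Finset.range (l1.drop (i+1)).length ×ˢ
        Finset.range (l2.drop (j+1)).length)).powerset.filter
        (fun M => (∀ p ∈ M, ∀ q ∈ M, (p.1 = q.1 ∨ p.2 = q.2) → p = q) ∧
          ∀ p ∈ M, τmin ≤ (l2.drop (j+1)).getD p.2 0 - (l1.drop (i+1)).getD p.1 0 ∧
            (l2.drop (j+1)).getD p.2 0 - (l1.drop (i+1)).getD p.1 0 ≤ τmax)).Nonempty := by
      refine ⟨∅, ?_⟩
      simp
    obtain ⟨M', hM', hcard'⟩ := Finset.exists_mem_eq_sup _ hne Finset.card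
    simp only [Finset.mem_filter, Finset.mem_powerset] at hM'
    obtain ⟨hsub', hinj', hval'⟩ := hM'
    have hMeq : maxMatch τmin τmax (l1.drop (i+1)) (l2.drop (j+1)) = M'.card := by
      rw [maxMatch]; exact hcard'
    set un : ℕ × ℕ → ℕ × ℕ := fun p => (p.1 + (i + 1), p.2 + (j + 1)) with hun
    set N : Finset (ℕ × ℕ) := insert (i, j) (M'.image un) with hN
    have hbnd' : ∀ p ∈ M', p.1 + (i+1) < l1.length ∧ p.2 + (j+1) < l2.length := by
      intro p hp
      have := hsub' hp
      simp only [Finset.mem_product, Finset.mem_range, List.length_drop] at this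
      omega
    have hijnot : (i, j) ∉ M'.image un := by
      intro h
      obtain ⟨x, -, hx⟩ := Finset.mem_image.mp h
      have : x.1 + (i + 1) = i := congrArg Prod.fst hx
      omega
    have hcardN : N.card = M'.card + 1 := by
      rw [hN, Finset.card_insert_of_notMem hijnot,
        Finset.card_image_of_injective _ (fun a b hab => ?_)]
      have e1 : a.1 + (i+1) = b.1 + (i+1) := congrArg Prod.fst hab
      have e2 : a.2 + (j+1) = b.2 + (j+1) := congrArg Prod.snd hab
      exact Prod.ext (by omega) (by omega)
    have hle : N.card ≤ maxMatch τmin τmax l1 l2 := by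
      apply le_maxMatch
      · intro p hp
        rcases Finset.mem_insert.mp hp with rfl | hp'
        · exact ⟨hi, hj⟩
        · obtain ⟨x, hx, rfl⟩ := Finset.mem_image.mp hp'
          exact hbnd' x hx
      · intro a ha b hb hab
        rcases Finset.mem_insert.mp ha with rfl | ha' <;>
          rcases Finset.mem_insert.mp hb with rfl | hb'
        · rfl
        · obtain ⟨x, hx, rfl⟩ := Finset.mem_image.mp hb'
          simp only [un] at hab
          rcases hab with h | h <;> omega
        · obtain ⟨x, hx, rfl⟩ := Finset.mem_image.mp ha'
          simp only [un] at hab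
          rcases hab with h | h <;> omega
        · obtain ⟨x, hx, rfl⟩ := Finset.mem_image.mp ha'
          obtain ⟨y, hy, rfl⟩ := Finset.mem_image.mp hb'
          have : x = y := by
            apply hinj' x hx y hy
            simp only [un] at hab
            rcases hab with h | h
            · exact Or.inl (by omega)
            · exact Or.inr (by omega)
          rw [this]
      · intro p hp
        rcases Finset.mem_insert.mp hp with rfl | hp'
        · exact hvalid
        · obtain ⟨x, hx, rfl⟩ := Finset.mem_image.mp hp'
          obtain ⟨hb1, hb2⟩ := hbnd' x hx
          have e1 : l1.getD (x.1 + (i+1)) 0 = (l1.drop (i+1)).getD x.1 0 := by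
            rw [getD_drop' _ _ _ (by omega)]
            congr 1; omega
          have e2 : l2.getD (x.2 + (j+1)) 0 = (l2.drop (j+1)).getD x.2 0 := by
            rw [getD_drop' _ _ _ (by omega)]
            congr 1; omega
          simp only [un]
          rw [e1, e2]
          exact hval' x hx
    omega
end

section
/- Let τ_min ≤ τ_max and δ ≥ 0 and let (t_1,...,t_n), (s_1,...,s_n) be two tuples of reals that each satisfy a common collection of constraints, where each constraint is either a chain constraint τ_min ≤ x_b - x_a ≤ τ_max for some ordered index pair (a,b), or a sibling constraint |x_a - x_b| ≤ δ for some index pair {a,b}. Then the componentwise minimum tuple (min(t_1,s_1), ..., min(t_n,s_n)) also satisfies every constraint in the collection. -/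
/-- if two tuples each satisfy a common collection of chain
constraints (ordered pairs) and sibling constraints (pairs), then their
componentwise minimum satisfies every constraint in the collection. -/
theorem min_satisfies_constraints (τmin τmax δ : ℝ) (hτ : τmin ≤ τmax) (hδ : 0 ≤ δ)
    {n : ℕ} (chains siblings : Set (Fin n × Fin n)) (t s : Fin n → ℝ)
    (htc : ∀ c ∈ chains, τmin ≤ t c.2 - t c.1 ∧ t c.2 - t c.1 ≤ τmax)
    (hsc : ∀ c ∈ chains, τmin ≤ s c.2 - s c.1 ∧ s c.2 - s c.1 ≤ τmax)
    (hts : ∀ c ∈ siblings, |t c.1 - t c.2| ≤ δ)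
    (hss : ∀ c ∈ siblings, |s c.1 - s c.2| ≤ δ) :
    (∀ c ∈ chains,
      τmin ≤ min (t c.2) (s c.2) - min (t c.1) (s c.1) ∧
      min (t c.2) (s c.2) - min (t c.1) (s c.1) ≤ τmax) ∧
    (∀ c ∈ siblings, |min (t c.1) (s c.1) - min (t c.2) (s c.2)| ≤ δ) := by
  constructor
  · intro c hc
    obtain ⟨h1, h2⟩ := htc c hc
    obtain ⟨h3, h4⟩ := hsc c hc
    constructor
    · simp only [min_def]; split <;> split <;> linarith
    · simp only [min_def]; split <;> split <;> linarith
  · intro c hc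
    have h1 := abs_le.mp (hts c hc)
    have h2 := abs_le.mp (hss c hc)
    rw [abs_le]
    simp only [min_def]
    constructor <;> split <;> split <;> linarith
end

section
/- Let L1, L2 be sorted lists of reals, τ_min ≤ τ_max, and suppose M = {(a_1,b_1), ..., (a_k,b_k)} with a_1 < ... < a_k and b_1 < ... < b_k is the non-crossing valid matching produced by the greedy earliest-match algorithm. Then for any non-crossing valid matching M' = {(a'_1,b'_1),...,(a'_j,b'_j)} (with indices increasing) we have j ≤ k, and for each i ≤ j, a_i ≤ a'_i and b_i ≤ b'_i. -/
/-- The greedy earliest-match algorithm, returning the list of matched index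
pairs (indices are absolute positions in the original lists, tracked by the
offsets `i`, `j`). -/
noncomputable def greedyMatch (τmin τmax : ℝ) : List ℝ → List ℝ → ℕ → ℕ → List (ℕ × ℕ)
  | [], _, _, _ => []
  | _ :: _, [], _, _ => []
  | t :: ts, s :: ss, i, j =>
      if s - t < τmin then greedyMatch τmin τmax (t :: ts) ss i (j + 1)
      else if τmax < s - t then greedyMatch τmin τmax ts (s :: ss) (i + 1) j
      else (i, j) :: greedyMatch τmin τmax ts ss (i + 1) (j + 1)
  termination_by l1 l2 => l1.length + l2.length
  decreasing_by all_goals simp +arith +decide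

lemma getD_mono (L : List ℝ) (h : L.Pairwise (· ≤ ·)) {a b : ℕ} (hab : a ≤ b)
    (hb : b < L.length) : L.getD a 0 ≤ L.getD b 0 := by
  rcases hab.lt_or_eq with h' | rfl
  · rw [List.getD_eq_getElem _ _ (h'.trans hb), List.getD_eq_getElem _ _ hb]
    exact List.pairwise_iff_getElem.mp h a b (h'.trans hb) hb h'
  · rfl

lemma getD_drop (L : List ℝ) (i k : ℕ) : (L.drop i).getD k 0 = L.getD (i + k) 0 := by
  simp [List.getD_eq_getElem?_getD, List.getElem?_drop]

lemma lt_length_of_drop_cons {L : List ℝ} {i : ℕ} {t : ℝ} {ts : List ℝ}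
    (h : L.drop i = t :: ts) : i < L.length := by
  by_contra hc
  rw [List.drop_eq_nil_of_le (le_of_not_gt hc)] at h
  simp at h

theorem greedy_master (τmin τmax : ℝ) (hτ : τmin ≤ τmax) (L1 L2 : List ℝ)
    (h1 : L1.Pairwise (· ≤ ·)) (h2 : L2.Pairwise (· ≤ ·)) (i j : ℕ) :
    (greedyMatch τmin τmax (L1.drop i) (L2.drop j) i j).Pairwise
      (fun p q => p.1 < q.1 ∧ p.2 < q.2) ∧
    (∀ p ∈ greedyMatch τmin τmax (L1.drop i) (L2.drop j) i j,
      i ≤ p.1 ∧ p.1 < L1.length ∧ j ≤ p.2 ∧ p.2 < L2.length ∧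
      τmin ≤ L2.getD p.2 0 - L1.getD p.1 0 ∧ L2.getD p.2 0 - L1.getD p.1 0 ≤ τmax) ∧
    ∀ M' : List (ℕ × ℕ),
      M'.Pairwise (fun p q => p.1 < q.1 ∧ p.2 < q.2) →
      (∀ p ∈ M', i ≤ p.1 ∧ p.1 < L1.length ∧ j ≤ p.2 ∧ p.2 < L2.length ∧
        τmin ≤ L2.getD p.2 0 - L1.getD p.1 0 ∧ L2.getD p.2 0 - L1.getD p.1 0 ≤ τmax) →
      M'.length ≤ (greedyMatch τmin τmax (L1.drop i) (L2.drop j) i j).length ∧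
      ∀ k < M'.length,
        ((greedyMatch τmin τmax (L1.drop i) (L2.drop j) i j).getD k (0, 0)).1
          ≤ (M'.getD k (0, 0)).1 ∧
        ((greedyMatch τmin τmax (L1.drop i) (L2.drop j) i j).getD k (0, 0)).2
          ≤ (M'.getD k (0, 0)).2 := by
  rcases hd1 : L1.drop i with _ | ⟨t, ts⟩
  · simp only [greedyMatch]
    have hlen1 : L1.length ≤ i := by
      by_contra hc
      rw [List.drop_eq_nil_iff] at hd1; omega
    refine ⟨List.Pairwise.nil, by simp, ?_⟩
    intro M' _ hval
    have : M' = [] := by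
      cases M' with
      | nil => rfl
      | cons p rest =>
        exfalso
        obtain ⟨hp1, hp2, _⟩ := hval p (List.mem_cons_self)
        omega
    subst this
    simp
  · rcases hd2 : L2.drop j with _ | ⟨s, ss⟩
    · simp only [greedyMatch]
      have hlen2 : L2.length ≤ j := by
        by_contra hc
        rw [List.drop_eq_nil_iff] at hd2; omega
      refine ⟨List.Pairwise.nil, by simp, ?_⟩
      intro M' _ hval
      have : M' = [] := by
        cases M' with
        | nil => rfl
        | cons p rest =>
          exfalso
          obtain ⟨_, _, hp3, hp4, _⟩ := hval p (List.mem_cons_self)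
          omega
      subst this
      simp
    · have hi : i < L1.length := lt_length_of_drop_cons hd1
      have hj : j < L2.length := lt_length_of_drop_cons hd2
      have hti : L1.getD i 0 = t := by
        have := getD_drop L1 i 0
        rw [hd1] at this; simpa using this.symm
      have hsj : L2.getD j 0 = s := by
        have := getD_drop L2 j 0
        rw [hd2] at this; simpa using this.symm
      have hts : L1.drop (i + 1) = ts := by rw [← List.tail_drop, hd1]; rfl
      have hss : L2.drop (j + 1) = ss := by rw [← List.tail_drop, hd2]; rfl
      rw [greedyMatch]
      split_ifs with hlt hgt
      · -- s - t < τmin : skip s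
        have IH := greedy_master τmin τmax hτ L1 L2 h1 h2 i (j + 1)
        rw [hd1, hss] at IH
        obtain ⟨IH1, IH2, IH3⟩ := IH
        refine ⟨IH1, ?_, ?_⟩
        · intro p hp
          obtain ⟨a1, a2, a3, a4, a5, a6⟩ := IH2 p hp
          exact ⟨a1, a2, by omega, a4, a5, a6⟩
        · intro M' hpw hval
          apply IH3 M' hpw
          intro p hp
          obtain ⟨a1, a2, a3, a4, a5, a6⟩ := hval p hp
          have hkey : j + 1 ≤ p.2 := by
            by_contra hc
            have hpj : p.2 = j := by omega
            have : L1.getD i 0 ≤ L1.getD p.1 0 := getD_mono L1 h1 a1 a2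
            rw [hpj, hsj] at a5
            rw [hti] at this
            linarith
          exact ⟨a1, a2, hkey, a4, a5, a6⟩
      · -- τmax < s - t : skip t
        have IH := greedy_master τmin τmax hτ L1 L2 h1 h2 (i + 1) j
        rw [hts, hd2] at IH
        obtain ⟨IH1, IH2, IH3⟩ := IH
        refine ⟨IH1, ?_, ?_⟩
        · intro p hp
          obtain ⟨a1, a2, a3, a4, a5, a6⟩ := IH2 p hp
          exact ⟨by omega, a2, a3, a4, a5, a6⟩
        · intro M' hpw hval
          apply IH3 M' hpw
          intro p hp
          obtain ⟨a1, a2, a3, a4, a5, a6⟩ := hval p hp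
          have hkey : i + 1 ≤ p.1 := by
            by_contra hc
            have hpi : p.1 = i := by omega
            have : L2.getD j 0 ≤ L2.getD p.2 0 := getD_mono L2 h2 a3 a4
            rw [hpi, hti] at a6
            rw [hsj] at this
            linarith
          exact ⟨hkey, a2, a3, a4, a5, a6⟩
      · -- match (i, j)
        have IH := greedy_master τmin τmax hτ L1 L2 h1 h2 (i + 1) (j + 1)
        rw [hts, hss] at IH
        obtain ⟨IH1, IH2, IH3⟩ := IH
        refine ⟨?_, ?_, ?_⟩
        · rw [List.pairwise_cons]
          refine ⟨?_, IH1⟩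
          intro q hq
          obtain ⟨a1, _, a3, _⟩ := IH2 q hq
          exact ⟨by omega, by omega⟩
        · intro p hp
          rcases List.mem_cons.mp hp with rfl | hp'
          · exact ⟨le_refl i, hi, le_refl j, hj, by rw [hti, hsj]; linarith,
              by rw [hti, hsj]; linarith⟩
          · obtain ⟨a1, a2, a3, a4, a5, a6⟩ := IH2 p hp'
            exact ⟨by omega, a2, by omega, a4, a5, a6⟩
        · intro M' hpw hval
          cases M' with
          | nil => simp
          | cons p rest =>
            obtain ⟨hp1, hp2, hp3, hp4, hp5, hp6⟩ :=
              hval p (List.mem_cons_self)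
            have hpw' := List.pairwise_cons.mp hpw
            have hrest : ∀ q ∈ rest, i + 1 ≤ q.1 ∧ q.1 < L1.length ∧
                j + 1 ≤ q.2 ∧ q.2 < L2.length ∧
                τmin ≤ L2.getD q.2 0 - L1.getD q.1 0 ∧
                L2.getD q.2 0 - L1.getD q.1 0 ≤ τmax := by
              intro q hq
              obtain ⟨b1, b2, b3, b4, b5, b6⟩ := hval q (List.mem_cons_of_mem p hq)
              obtain ⟨c1, c2⟩ := hpw'.1 q hq
              exact ⟨by omega, b2, by omega, b4, b5, b6⟩
            obtain ⟨hlen, hdom⟩ := IH3 rest hpw'.2 hrest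
            refine ⟨by simpa using Nat.succ_le_succ hlen, ?_⟩
            intro k hk
            cases k with
            | zero => simpa using ⟨hp1, hp3⟩
            | succ k =>
              simp only [List.getD_cons_succ]
              exact hdom k (by simpa using Nat.lt_of_succ_lt_succ hk)
  termination_by (L1.drop i).length + (L2.drop j).length
  decreasing_by
  · simp only [hd1, hd2, hss, List.length_cons]; omega
  · simp only [hd1, hd2, hts, List.length_cons]; omega
  · simp only [hd1, hd2, hts, hss, List.length_cons]; omega

/-- the greedy matching `M` is a non-crossing valid matching, and
for every non-crossing valid matching `M'` (pairs listed with strictly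
increasing coordinates) we have `|M'| ≤ |M|` and the `i`-th pair of `M` is
componentwise at most the `i`-th pair of `M'`. -/
theorem greedy_earliest_and_maximum (τmin τmax : ℝ) (hτ : τmin ≤ τmax)
    (l1 l2 : List ℝ) (h1 : l1.Pairwise (· ≤ ·)) (h2 : l2.Pairwise (· ≤ ·)) :
    (greedyMatch τmin τmax l1 l2 0 0).Pairwise (fun p q => p.1 < q.1 ∧ p.2 < q.2) ∧
    (∀ p ∈ greedyMatch τmin τmax l1 l2 0 0, p.1 < l1.length ∧ p.2 < l2.length ∧
      τmin ≤ l2.getD p.2 0 - l1.getD p.1 0 ∧ l2.getD p.2 0 - l1.getD p.1 0 ≤ τmax) ∧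
    ∀ M' : List (ℕ × ℕ),
      M'.Pairwise (fun p q => p.1 < q.1 ∧ p.2 < q.2) →
      (∀ p ∈ M', p.1 < l1.length ∧ p.2 < l2.length ∧
        τmin ≤ l2.getD p.2 0 - l1.getD p.1 0 ∧ l2.getD p.2 0 - l1.getD p.1 0 ≤ τmax) →
      M'.length ≤ (greedyMatch τmin τmax l1 l2 0 0).length ∧
      ∀ i < M'.length,
        ((greedyMatch τmin τmax l1 l2 0 0).getD i (0, 0)).1 ≤ (M'.getD i (0, 0)).1 ∧
        ((greedyMatch τmin τmax l1 l2 0 0).getD i (0, 0)).2 ≤ (M'.getD i (0, 0)).2 := by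
  have H := greedy_master τmin τmax hτ l1 l2 h1 h2 0 0
  simp only [List.drop_zero] at H
  obtain ⟨H1, H2, H3⟩ := H
  refine ⟨H1, fun p hp => ?_, fun M' hpw hval => H3 M' hpw fun p hp => ?_⟩
  · obtain ⟨_, a2, _, a4, a5, a6⟩ := H2 p hp
    exact ⟨a2, a4, a5, a6⟩
  · obtain ⟨a2, a4, a5, a6⟩ := hval p hp
    exact ⟨Nat.zero_le _, a2, Nat.zero_le _, a4, a5, a6⟩
end
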